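/- Let ν ≥ 1 be an integer and x ∈ ℝ. For every complex s with Re(s) > ν/2, Re(s) > (ν − x)/2, and Re(x + 2s) > 1, the Dirichlet series identity ( Σ_{n=1}^∞ M_ν(n,x) n^{-s} ) · ζ(2s) = ζ(x + 2s) · ( Σ_{n=1}^∞ r_ν(n) n^{-s} ) holds, where all series converge absolutely and ζ is the Riemann zeta function. -/

import Mathlib

open scoped BigOperators

namespace Stmt14

variable {ν : ℕ}

/-- sum of squares as a natural number -/
def Q (m : Fin ν → ℤ) : ℕ := ∑ i, (m i).natAbs ^ 2

/-- gcd of the coordinates -/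
def G (m : Fin ν → ℤ) : ℕ := Finset.univ.gcd fun i => (m i).natAbs

lemma Q_cast (m : Fin ν → ℤ) : (Q m : ℤ) = ∑ i, (m i) ^ 2 := by
  unfold Q
  push_cast
  refine Finset.sum_congr rfl fun i _ => ?_
  exact sq_abs (m i)

lemma Q_eq_zero_iff (m : Fin ν → ℤ) : Q m = 0 ↔ m = 0 := by
  unfold Q
  rw [Finset.sum_eq_zero_iff]
  constructor
  · intro h; funext i
    have := h i (Finset.mem_univ i)
    simpa [pow_eq_zero_iff, Int.natAbs_eq_zero] using this
  · rintro rfl i _; simp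

lemma Q_pos {m : Fin ν → ℤ} (h : m ≠ 0) : 0 < Q m :=
  Nat.pos_of_ne_zero fun h0 => h ((Q_eq_zero_iff m).mp h0)

/-- scaling a vector by a natural number -/
def scl (k : ℕ) (m : Fin ν → ℤ) : Fin ν → ℤ := fun i => (k : ℤ) * m i

lemma Q_scl (k : ℕ) (m : Fin ν → ℤ) : Q (scl k m) = k ^ 2 * Q m := by
  unfold Q scl
  rw [Finset.mul_sum]
  refine Finset.sum_congr rfl fun i _ => ?_
  rw [Int.natAbs_mul, Int.natAbs_natCast, mul_pow]

lemma G_scl (k : ℕ) (m : Fin ν → ℤ) : G (scl k m) = k * G m := by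
  unfold G scl
  have : (fun i => ((k : ℤ) * m i).natAbs) = fun i => k * (m i).natAbs := by
    funext i; rw [Int.natAbs_mul, Int.natAbs_natCast]
  rw [this, Finset.gcd_mul_left, normalize_eq]

lemma G_eq_zero_iff (m : Fin ν → ℤ) : G m = 0 ↔ m = 0 := by
  unfold G
  rw [Finset.gcd_eq_zero_iff]
  constructor
  · intro h; funext i
    simpa [Int.natAbs_eq_zero] using h i (Finset.mem_univ i)
  · rintro rfl i _; simp

lemma G_pos {m : Fin ν → ℤ} (h : m ≠ 0) : 0 < G m :=
  Nat.pos_of_ne_zero fun h0 => h ((G_eq_zero_iff m).mp h0)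

lemma G_dvd (m : Fin ν → ℤ) (i : Fin ν) : (G m : ℤ) ∣ m i := by
  have h := Finset.gcd_dvd (f := fun i => (m i).natAbs) (Finset.mem_univ i)
  rw [← Int.natAbs_dvd_natAbs]
  simpa [G] using h

/-- the primitive part: coordinates divided by the gcd -/
def U (m : Fin ν → ℤ) : Fin ν → ℤ := fun i => m i / (G m : ℤ)

lemma scl_G_U {m : Fin ν → ℤ} (h : m ≠ 0) : scl (G m) (U m) = m := by
  funext i
  exact Int.mul_ediv_cancel' (G_dvd m i)

lemma U_ne_zero {m : Fin ν → ℤ} (h : m ≠ 0) : U m ≠ 0 := by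
  intro h0
  apply h
  rw [← scl_G_U h, h0]
  funext i; simp [scl]

lemma scl_ne_zero {k : ℕ} (hk : k ≠ 0) {m : Fin ν → ℤ} (h : m ≠ 0) : scl k m ≠ 0 := by
  intro h0
  apply h
  funext i
  have := congrFun h0 i
  simp only [scl, Pi.zero_apply, mul_eq_zero] at this
  rcases this with h' | h'
  · exact absurd (by exact_mod_cast h') hk
  · exact h'

lemma G_U {m : Fin ν → ℤ} (h : m ≠ 0) : G (U m) = 1 := by
  have h1 : G m * G (U m) = G m * 1 := by
    rw [mul_one, ← G_scl, scl_G_U h]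
  exact Nat.eq_of_mul_eq_mul_left (G_pos h) h1

lemma U_scl {m : Fin ν → ℤ} (hm : G m = 1) {k : ℕ} (hk : k ≠ 0) : U (scl k m) = m := by
  funext i
  unfold U
  rw [G_scl, hm, mul_one, scl]
  exact Int.mul_ediv_cancel_left _ (by exact_mod_cast hk)

lemma G_sq_le_Q {m : Fin ν → ℤ} (h : m ≠ 0) : G m ^ 2 ≤ Q m := by
  obtain ⟨i, hi⟩ : ∃ i, m i ≠ 0 := by
    by_contra hc
    push_neg at hc
    exact h (funext hc)
  have h1 : G m ∣ (m i).natAbs := Finset.gcd_dvd (Finset.mem_univ i)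
  have h2 : G m ≤ (m i).natAbs :=
    Nat.le_of_dvd (Int.natAbs_pos.mpr hi) h1
  calc G m ^ 2 ≤ (m i).natAbs ^ 2 := Nat.pow_le_pow_left h2 2
    _ ≤ Q m := Finset.single_le_sum (f := fun j => (m j).natAbs ^ 2)
      (fun j _ => Nat.zero_le _) (Finset.mem_univ i)

lemma summable_one_int {c : ℝ} (hc : 1 < c) :
    Summable fun a : ℤ => ((1 : ℝ) + (a.natAbs : ℝ)) ^ (-c) := by
  have hnat : Summable fun n : ℕ => ((1 : ℝ) + (n : ℝ)) ^ (-c) := by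
    have h0 : Summable fun n : ℕ => ((n : ℝ)) ^ (-c) :=
      Real.summable_nat_rpow.mpr (by linarith)
    have := (summable_nat_add_iff (f := fun n : ℕ => ((n : ℝ)) ^ (-c)) 1).mpr h0
    refine this.congr fun n => ?_
    push_cast
    ring_nf
  apply Summable.of_nat_of_neg
  · refine hnat.congr fun n => ?_
    simp
  · refine hnat.congr fun n => ?_
    simp

lemma summable_prod_pi (ν : ℕ) {c : ℝ} (hc : 1 < c) :
    Summable fun m : Fin ν → ℤ => ∏ i, ((1 : ℝ) + ((m i).natAbs : ℝ)) ^ (-c) := by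
  induction ν with
  | zero => exact Summable.of_finite
  | succ n ih =>
    have h1 : (0:ℤ → ℝ) ≤ fun a : ℤ => ((1 : ℝ) + ((a.natAbs : ℝ))) ^ (-c) :=
      fun a => by positivity
    have h2 : (0:(Fin n → ℤ) → ℝ) ≤ fun m : Fin n → ℤ =>
        ∏ i, ((1 : ℝ) + ((m i).natAbs : ℝ)) ^ (-c) := fun m => by positivity
    have key := Summable.mul_of_nonneg (f := fun a : ℤ => ((1 : ℝ) + ((a.natAbs : ℝ))) ^ (-c))
      (g := fun m : Fin n → ℤ => ∏ i, ((1 : ℝ) + ((m i).natAbs : ℝ)) ^ (-c))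
      (summable_one_int hc) ih h1 h2
    rw [← (Fin.consEquiv (fun _ : Fin (n + 1) => ℤ)).summable_iff]
    refine key.congr fun p => ?_
    obtain ⟨a, m⟩ := p
    simp only [Function.comp_apply, Fin.consEquiv_apply]
    rw [Fin.prod_univ_succ]
    simp

lemma summable_Q {ν : ℕ} (hν : 0 < ν) {t : ℝ} (ht : (ν : ℝ) < 2 * t) :
    Summable fun m : {m : Fin ν → ℤ // m ≠ 0} => ((Q m.1 : ℝ)) ^ (-t) := by
  have hν' : (0 : ℝ) < ν := by exact_mod_cast hν
  have ht0 : 0 < t := by nlinarith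
  set c : ℝ := 2 * t / ν with hc_def
  have hc : 1 < c := by
    rw [hc_def, lt_div_iff₀ hν']
    linarith
  have hνc : (ν : ℝ) * c = 2 * t := by
    rw [hc_def]
    field_simp
  -- the comparison function
  have hbase : Summable fun m : {m : Fin ν → ℤ // m ≠ 0} =>
      (2 : ℝ) ^ (2 * t) * ∏ i, ((1 : ℝ) + (((m.1 i).natAbs : ℝ))) ^ (-c) := by
    exact (((summable_prod_pi ν hc).comp_injective Subtype.val_injective)).mul_left _
  refine Summable.of_nonneg_of_le (fun m => by positivity) (fun m => ?_) hbase
  obtain ⟨m, hm⟩ := m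
  -- the sup of the absolute values
  set B : ℕ := Finset.univ.sup (fun i => (m i).natAbs) with hB_def
  haveI : Nonempty (Fin ν) := Fin.pos_iff_nonempty.mp hν
  obtain ⟨i₀, -, hi₀⟩ := Finset.exists_mem_eq_sup Finset.univ
    Finset.univ_nonempty (fun i => (m i).natAbs)
  have hB1 : 1 ≤ B := by
    obtain ⟨j, hj⟩ : ∃ j, m j ≠ 0 := by
      by_contra hc'
      push_neg at hc'
      exact hm (funext hc')
    calc 1 ≤ (m j).natAbs := Int.natAbs_pos.mpr hj
      _ ≤ B := Finset.le_sup (f := fun i => (m i).natAbs) (Finset.mem_univ j)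
  have hBQ : B ^ 2 ≤ Q m := by
    rw [hB_def, hi₀]
    exact Finset.single_le_sum (f := fun j => (m j).natAbs ^ 2)
      (fun j _ => Nat.zero_le _) (Finset.mem_univ i₀)
  have hBr : (1 : ℝ) ≤ (B : ℝ) := by exact_mod_cast hB1
  have hBpos : (0 : ℝ) < (B : ℝ) := by linarith
  -- step 1 : (Q m)^(-t) ≤ (B^2)^(-t) = B^(-(2t))
  have s1 : ((Q m : ℝ)) ^ (-t) ≤ ((B : ℝ) ^ (2 : ℕ)) ^ (-t) := by
    apply Real.rpow_le_rpow_of_nonpos (by positivity)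
    · exact_mod_cast hBQ
    · linarith
  have s2 : ((B : ℝ) ^ (2 : ℕ)) ^ (-t) = (B : ℝ) ^ (-(2 * t)) := by
    rw [← Real.rpow_natCast (B : ℝ) 2, ← Real.rpow_mul hBpos.le]
    norm_num
  -- step 2 : the product bound
  set P : ℝ := ∏ i, ((1 : ℝ) + (((m i).natAbs : ℝ))) with hP_def
  have hPpos : 0 < P := Finset.prod_pos fun i _ => by positivity
  have hP2B : P ≤ (2 * B) ^ ν := by
    rw [hP_def]
    calc ∏ i, ((1 : ℝ) + (((m i).natAbs : ℝ)))
        ≤ ∏ _i : Fin ν, (2 * (B : ℝ)) := by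
          apply Finset.prod_le_prod (fun i _ => by positivity)
          intro i _
          have : ((m i).natAbs : ℝ) ≤ (B : ℝ) := by
            exact_mod_cast Finset.le_sup (f := fun i => (m i).natAbs) (Finset.mem_univ i)
          linarith
      _ = (2 * (B : ℝ)) ^ ν := by
          rw [Finset.prod_const, Finset.card_univ, Fintype.card_fin]
  have hPc : P ^ c ≤ (2 : ℝ) ^ (2 * t) * (B : ℝ) ^ (2 * t) := by
    calc P ^ c ≤ ((2 * (B : ℝ)) ^ ν) ^ c :=
          Real.rpow_le_rpow hPpos.le hP2B (by linarith)
      _ = (2 * (B : ℝ)) ^ ((ν : ℝ) * c) := by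
          rw [← Real.rpow_natCast (2 * (B : ℝ)) ν, ← Real.rpow_mul (by positivity)]
      _ = (2 * (B : ℝ)) ^ (2 * t) := by rw [hνc]
      _ = (2 : ℝ) ^ (2 * t) * (B : ℝ) ^ (2 * t) := Real.mul_rpow (by norm_num) hBpos.le
  have s3 : (B : ℝ) ^ (-(2 * t)) ≤ (2 : ℝ) ^ (2 * t) * P ^ (-c) := by
    rw [Real.rpow_neg hBpos.le, Real.rpow_neg hPpos.le]
    have hPcpos : 0 < P ^ c := Real.rpow_pos_of_pos hPpos c
    have hBtpos : 0 < (B : ℝ) ^ (2 * t) := Real.rpow_pos_of_pos hBpos _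
    rw [le_mul_inv_iff₀ hPcpos, inv_mul_eq_div, div_le_iff₀ hBtpos] at *
    · nlinarith [hPc]
  have s4 : P ^ (-c) = ∏ i, ((1 : ℝ) + (((m i).natAbs : ℝ))) ^ (-c) := by
    rw [hP_def, ← Real.finset_prod_rpow _ _ (fun i _ => by positivity)]
  calc ((Q m : ℝ)) ^ (-t) ≤ (B : ℝ) ^ (-(2 * t)) := by rw [← s2]; exact s1
    _ ≤ (2 : ℝ) ^ (2 * t) * P ^ (-c) := s3
    _ = (2 : ℝ) ^ (2 * t) * ∏ i, ((1 : ℝ) + (((m i).natAbs : ℝ))) ^ (-c) := by rw [s4]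


lemma summable_GQ {ν : ℕ} (hν : 0 < ν) {x σ : ℝ} (h1 : (ν : ℝ) < 2 * σ)
    (h2 : (ν : ℝ) < 2 * σ + x) :
    Summable fun m : {m : Fin ν → ℤ // m ≠ 0} =>
      (G m.1 : ℝ) ^ (-x) * (Q m.1 : ℝ) ^ (-σ) := by
  have hb : Summable fun m : {m : Fin ν → ℤ // m ≠ 0} =>
      ((Q m.1 : ℝ)) ^ (-σ) + ((Q m.1 : ℝ)) ^ (-(σ + x / 2)) := by
    refine (summable_Q hν h1).add (summable_Q hν ?_)
    linarith
  refine Summable.of_nonneg_of_le (fun m => by positivity) (fun m => ?_) hb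
  obtain ⟨m, hm⟩ := m
  have hq : (0 : ℝ) < (Q m : ℝ) := by exact_mod_cast Q_pos hm
  have hg1 : (1 : ℝ) ≤ (G m : ℝ) := by exact_mod_cast G_pos hm
  have hg2 : ((G m : ℝ)) ^ (2 : ℕ) ≤ (Q m : ℝ) := by exact_mod_cast G_sq_le_Q hm
  rcases le_or_gt 0 x with hx | hx
  · have hgle : (G m : ℝ) ^ (-x) ≤ 1 :=
      Real.rpow_le_one_of_one_le_of_nonpos hg1 (by linarith)
    have : (G m : ℝ) ^ (-x) * (Q m : ℝ) ^ (-σ) ≤ 1 * (Q m : ℝ) ^ (-σ) := by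
      apply mul_le_mul_of_nonneg_right hgle (by positivity)
    rw [one_mul] at this
    have h0 : (0:ℝ) ≤ (Q m : ℝ) ^ (-(σ + x / 2)) := by positivity
    linarith
  · have key : (G m : ℝ) ^ (-x) ≤ (Q m : ℝ) ^ (-x / 2) := by
      have e1 : (G m : ℝ) ^ (-x) = (((G m : ℝ)) ^ (2 : ℕ)) ^ (-x / 2) := by
        rw [← Real.rpow_natCast (G m : ℝ) 2, ← Real.rpow_mul (by linarith)]
        congr 1
        ring
      rw [e1]
      exact Real.rpow_le_rpow (by positivity) hg2 (by linarith)
    have h3 : (G m : ℝ) ^ (-x) * (Q m : ℝ) ^ (-σ)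
        ≤ (Q m : ℝ) ^ (-x / 2) * (Q m : ℝ) ^ (-σ) :=
      mul_le_mul_of_nonneg_right key (by positivity)
    have h4 : (Q m : ℝ) ^ (-x / 2) * (Q m : ℝ) ^ (-σ) = (Q m : ℝ) ^ (-(σ + x / 2)) := by
      rw [← Real.rpow_add hq]
      ring_nf
    have h0 : (0:ℝ) ≤ (Q m : ℝ) ^ (-σ) := by positivity
    rw [h4] at h3
    linarith

lemma zeta_pnat {w : ℂ} (hw : 1 < w.re) :
    riemannZeta w = ∑' k : ℕ+, ((k : ℕ) : ℂ) ^ (-w) := by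
  rw [zeta_eq_tsum_one_div_nat_add_one_cpow hw]
  rw [← Equiv.pnatEquivNat.symm.tsum_eq (fun k : ℕ+ => ((k : ℕ) : ℂ) ^ (-w))]
  refine tsum_congr fun n => ?_
  have : ((Equiv.pnatEquivNat.symm n : ℕ+) : ℕ) = n + 1 := rfl
  rw [this, Complex.cpow_neg, one_div]
  push_cast
  rfl

lemma norm_nat_cpow {n : ℕ} (hn : 0 < n) (w : ℂ) :
    ‖((n : ℕ) : ℂ) ^ w‖ = (n : ℝ) ^ w.re := by
  rw [show ((n : ℕ) : ℂ) = (((n : ℝ)) : ℂ) by norm_cast,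
    Complex.norm_cpow_eq_rpow_re_of_pos (by exact_mod_cast hn)]

lemma summable_zk {w : ℂ} (hw : 1 < w.re) :
    Summable fun k : ℕ+ => ‖((k : ℕ) : ℂ) ^ (-w)‖ := by
  have hsum : Summable fun n : ℕ => ((n : ℝ)) ^ (-w.re) :=
    Real.summable_nat_rpow.mpr (by linarith)
  have := hsum.comp_injective (fun a b h => PNat.coe_injective h :
    Function.Injective (fun k : ℕ+ => (k : ℕ)))
  refine this.congr fun k => ?_
  have hk := norm_nat_cpow (n := (k : ℕ)) k.2 (-w)
  simp only [Function.comp_apply, Complex.neg_re] at hk ⊢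
  exact hk.symm

/-- The representation fiber. -/
abbrev fiber (ν n : ℕ) := {m : Fin ν → ℤ // ∑ i, (m i) ^ 2 = (n : ℤ)}

/-- Nonzero lattice vectors. -/
abbrev S (ν : ℕ) := {m : Fin ν → ℤ // m ≠ 0}

instance fiber_finite (ν n : ℕ) : Finite (fiber ν n) := by
  have hfin : {m : Fin ν → ℤ | ∑ i, (m i) ^ 2 = (n : ℤ)}.Finite := by
    apply Set.Finite.subset (Set.Finite.pi fun _ : Fin ν => Set.finite_Icc (-(n : ℤ)) n)
    intro m hm
    simp only [Set.mem_setOf_eq] at hm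
    intro i _
    have h1 : (m i) ^ 2 ≤ (n : ℤ) := by
      rw [← hm]
      exact Finset.single_le_sum (f := fun j => (m j) ^ 2)
        (fun j _ => sq_nonneg (m j)) (Finset.mem_univ i)
    have h2 : |m i| ≤ (m i) ^ 2 := by
      rcases eq_or_ne (m i) 0 with h | h
      · simp [h]
      · calc |m i| ≤ |m i| ^ 2 := le_self_pow₀ (Int.one_le_abs (by exact_mod_cast h)) two_ne_zero
          _ = (m i) ^ 2 := sq_abs (m i)
    simp only [Set.mem_Icc]
    constructor
    · have := neg_abs_le (m i); linarith
    · have := le_abs_self (m i); linarith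
  exact hfin.to_subtype

lemma Q_fiber {ν n : ℕ} (m : fiber ν n) : Q m.1 = n := by
  have h : (Q m.1 : ℤ) = (n : ℤ) := by rw [Q_cast]; exact m.2
  exact_mod_cast h

lemma fiber_ne_zero {ν : ℕ} {n : ℕ+} (m : fiber ν (n : ℕ)) : m.1 ≠ 0 := by
  intro h0
  have hq := Q_fiber m
  rw [h0, (Q_eq_zero_iff 0).mpr rfl] at hq
  exact n.2.ne' hq.symm

/-- map recording the value of `Q` -/
def qS (ν : ℕ) (m : S ν) : ℕ+ := ⟨Q m.1, Q_pos m.2⟩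

/-- fiber as a fiber of `qS` -/
def fiberEquiv (ν : ℕ) (n : ℕ+) : fiber ν (n : ℕ) ≃ {m : S ν // qS ν m = n} where
  toFun m := ⟨⟨m.1, fiber_ne_zero m⟩, by
    apply PNat.coe_injective
    exact Q_fiber m⟩
  invFun p := ⟨p.1.1, by
    rw [← Q_cast]
    have : Q p.1.1 = (n : ℕ) := congrArg (fun q : ℕ+ => (q : ℕ)) p.2
    exact_mod_cast congrArg (fun q : ℕ => (q : ℤ)) this⟩
  left_inv m := Subtype.ext rfl
  right_inv p := Subtype.ext (Subtype.ext rfl)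

/-- assembling the fibers -/
def E (ν : ℕ) : (Σ n : ℕ+, fiber ν (n : ℕ)) ≃ S ν :=
  (Equiv.sigmaCongrRight (fiberEquiv ν)).trans (Equiv.sigmaFiberEquiv (qS ν))


lemma tsum_fiber_eq {ν : ℕ} (f : ℕ → (Fin ν → ℤ) → ℂ)
    (hf : Summable fun m : S ν => f (Q m.1) m.1) :
    ∑' n : ℕ+, ∑' m : fiber ν (n : ℕ), f (n : ℕ) m.1 = ∑' m : S ν, f (Q m.1) m.1 := by
  have key : ∀ p : Σ n : ℕ+, fiber ν (n : ℕ),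
      f (Q ((E ν) p).1) ((E ν) p).1 = f ((p.1 : ℕ)) p.2.1 := by
    rintro ⟨n, m⟩
    have h1 : ((E ν) ⟨n, m⟩).1 = m.1 := rfl
    rw [h1, Q_fiber m]
  have h2 : Summable fun p : Σ n : ℕ+, fiber ν (n : ℕ) => f ((p.1 : ℕ)) p.2.1 := by
    have h3 := (((E ν).summable_iff
      (f := fun m : S ν => f (Q m.1) m.1))).mpr hf
    exact h3.congr key
  rw [← h2.tsum_sigma, ← (E ν).tsum_eq (fun m : S ν => f (Q m.1) m.1)]
  exact tsum_congr fun p => (key p).symm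

/-- The key bijection `(m, k) ↦ (gcd m, k • (m / gcd m))`. -/
def Phi (ν : ℕ) : S ν × ℕ+ ≃ ℕ+ × S ν where
  toFun p := (⟨G p.1.1, G_pos p.1.2⟩,
    ⟨scl (p.2 : ℕ) (U p.1.1), scl_ne_zero p.2.2.ne' (U_ne_zero p.1.2)⟩)
  invFun q := (⟨scl (q.1 : ℕ) (U q.2.1), scl_ne_zero q.1.2.ne' (U_ne_zero q.2.2)⟩,
    ⟨G q.2.1, G_pos q.2.2⟩)
  left_inv p := by
    obtain ⟨⟨m, hm⟩, k⟩ := p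
    have hU : U (scl (k : ℕ) (U m)) = U m := U_scl (G_U hm) k.2.ne'
    have hG : G (scl (k : ℕ) (U m)) = (k : ℕ) := by
      rw [G_scl, G_U hm, mul_one]
    refine Prod.ext (Subtype.ext ?_) (PNat.coe_injective ?_)
    · show scl (G m) (U (scl (k : ℕ) (U m))) = m
      rw [hU]
      exact scl_G_U hm
    · exact hG
  right_inv q := by
    obtain ⟨j, ⟨m, hm⟩⟩ := q
    have hU : U (scl (j : ℕ) (U m)) = U m := U_scl (G_U hm) j.2.ne'
    have hG : G (scl (j : ℕ) (U m)) = (j : ℕ) := by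
      rw [G_scl, G_U hm, mul_one]
    refine Prod.ext (PNat.coe_injective ?_) (Subtype.ext ?_)
    · exact hG
    · show scl (G m) (U (scl (j : ℕ) (U m))) = m
      rw [hU]
      exact scl_G_U hm

lemma sq_mul_cpow {a b : ℕ} (ha : 0 < a) (w : ℂ) :
    ((a ^ 2 * b : ℕ) : ℂ) ^ w = ((a : ℕ) : ℂ) ^ (2 * w) * ((b : ℕ) : ℂ) ^ w := by
  rw [show ((a ^ 2 * b : ℕ) : ℂ) = (((a ^ 2 : ℕ) : ℝ) : ℂ) * (((b : ℕ) : ℝ) : ℂ) by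
    push_cast; ring]
  rw [Complex.mul_cpow_ofReal_nonneg (by positivity) (by positivity)]
  congr 1
  · rw [show ((((a ^ 2 : ℕ) : ℝ)) : ℂ) = ((a : ℕ) : ℂ) ^ (2 : ℕ) by push_cast; ring]
    rw [show (2 : ℂ) * w = ((2 : ℕ) : ℂ) * w by norm_num]
    rw [Complex.cpow_nat_mul' (x := ((a : ℕ) : ℂ)) (n := 2) (y := w) ?_ ?_]
    · rw [Complex.natCast_arg]
      · simp [Real.pi_pos]
    · rw [Complex.natCast_arg]
      · simp [Real.pi_pos.le]

lemma term_eq {ν : ℕ} (x : ℝ) (s : ℂ) {m : Fin ν → ℤ} (hm : m ≠ 0) {k : ℕ} (hk : 0 < k) :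
    (((G m : ℝ) ^ (-x) : ℝ) : ℂ) * ((Q m : ℕ) : ℂ) ^ (-s) * ((k : ℕ) : ℂ) ^ (-(2 * s)) =
    ((G m : ℕ) : ℂ) ^ (-((x : ℂ) + 2 * s)) * ((Q (scl k (U m)) : ℕ) : ℂ) ^ (-s) := by
  have hg : 0 < G m := G_pos hm
  have hu : U m ≠ 0 := U_ne_zero hm
  have hQm : Q m = G m ^ 2 * Q (U m) := by
    conv_lhs => rw [← scl_G_U hm]
    rw [Q_scl]
  have hQk : Q (scl k (U m)) = k ^ 2 * Q (U m) := Q_scl k (U m)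
  rw [hQm, hQk, sq_mul_cpow hg (-s), sq_mul_cpow hk (-s)]
  have e1 : (((G m : ℝ) ^ (-x) : ℝ) : ℂ) = ((G m : ℕ) : ℂ) ^ (-(x : ℂ)) := by
    rw [Complex.ofReal_cpow (by positivity) (-x)]
    push_cast
    ring_nf
  have e2 : ((k : ℕ) : ℂ) ^ (-(2 * s)) = ((k : ℕ) : ℂ) ^ (2 * (-s)) := by
    congr 1; ring
  have e3 : ((G m : ℕ) : ℂ) ^ (-(x : ℂ)) * ((G m : ℕ) : ℂ) ^ (2 * (-s)) =
      ((G m : ℕ) : ℂ) ^ (-((x : ℂ) + 2 * s)) := by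
    rw [← Complex.cpow_add _ _ (by exact_mod_cast hg.ne')]
    congr 1; ring
  rw [e1, e2, ← e3]
  ring

end Stmt14

/-- The arithmetic function `M_ν(n,x) = Σ_{m ∈ ℤ^ν, |m|² = n} gcd(m)^{-x}`. -/
noncomputable def Mfun (ν : ℕ) (x : ℝ) (n : ℕ) : ℝ :=
  ∑' m : {m : Fin ν → ℤ // ∑ i, (m i) ^ 2 = (n : ℤ)},
    (((Finset.univ.gcd fun i => ((m : Fin ν → ℤ) i).natAbs) : ℕ) : ℝ) ^ (-x)

/-- The number of representations of `n` as a sum of `ν` squares. -/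
noncomputable def rfun (ν : ℕ) (n : ℕ) : ℕ :=
  Nat.card {m : Fin ν → ℤ // ∑ i, (m i) ^ 2 = (n : ℤ)}

open Stmt14 in
/-- the Dirichlet series identity
`D_ν(s;x) ζ(2s) = ζ(x+2s) Σ r_ν(n) n^{-s}`. -/
theorem stmt_14 (ν : ℕ) (hν : 1 ≤ ν) (x : ℝ) (s : ℂ)
    (h1 : (ν : ℝ) / 2 < s.re) (h2 : ((ν : ℝ) - x) / 2 < s.re) (h3 : 1 < x + 2 * s.re) :
    (∑' n : ℕ+, ((Mfun ν x (n : ℕ) : ℝ) : ℂ) * ((n : ℕ) : ℂ) ^ (-s)) *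
        riemannZeta (2 * s) =
      riemannZeta ((x : ℂ) + 2 * s) *
        ∑' n : ℕ+, ((rfun ν (n : ℕ) : ℕ) : ℂ) * ((n : ℕ) : ℂ) ^ (-s) := by
  have hν0 : 0 < ν := hν
  have hν1 : (1 : ℝ) ≤ (ν : ℝ) := by exact_mod_cast hν
  have hσ : (ν : ℝ) < 2 * s.re := by linarith
  have hσx : (ν : ℝ) < 2 * s.re + x := by linarith
  have h2sre : (2 * s).re = 2 * s.re := by simp [Complex.mul_re]
  have hxsre : ((x : ℂ) + 2 * s).re = x + 2 * s.re := by
    simp [Complex.add_re, Complex.mul_re]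
  have h2s : 1 < (2 * s).re := by rw [h2sre]; linarith
  have hxs : 1 < ((x : ℂ) + 2 * s).re := by rw [hxsre]; linarith
  -- summability of the main terms
  have hTMnorm : Summable fun m : S ν =>
      ‖(((G m.1 : ℝ) ^ (-x) : ℝ) : ℂ) * ((Q m.1 : ℕ) : ℂ) ^ (-s)‖ := by
    refine (summable_GQ hν0 hσ hσx).congr fun m => ?_
    rw [norm_mul, Complex.norm_real, Real.norm_eq_abs,
      abs_of_nonneg (Real.rpow_nonneg (Nat.cast_nonneg _) _),
      norm_nat_cpow (Q_pos m.2) (-s), Complex.neg_re]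
  have hTM : Summable fun m : S ν =>
      (((G m.1 : ℝ) ^ (-x) : ℝ) : ℂ) * ((Q m.1 : ℕ) : ℂ) ^ (-s) := hTMnorm.of_norm
  have hTRnorm : Summable fun m : S ν => ‖((Q m.1 : ℕ) : ℂ) ^ (-s)‖ := by
    refine (summable_Q hν0 hσ).congr fun m => ?_
    rw [norm_nat_cpow (Q_pos m.2) (-s), Complex.neg_re]
  have hTR : Summable fun m : S ν => ((Q m.1 : ℕ) : ℂ) ^ (-s) := hTRnorm.of_norm
  have hzk2 : Summable fun k : ℕ+ => ‖((k : ℕ) : ℂ) ^ (-(2 * s))‖ := summable_zk h2s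
  have hzkx : Summable fun j : ℕ+ => ‖((j : ℕ) : ℂ) ^ (-((x : ℂ) + 2 * s))‖ := summable_zk hxs
  -- step 1 : the M-side Dirichlet series as a sum over nonzero lattice points
  have hL1 : (∑' n : ℕ+, ((Mfun ν x (n : ℕ) : ℝ) : ℂ) * ((n : ℕ) : ℂ) ^ (-s)) =
      ∑' m : S ν, (((G m.1 : ℝ) ^ (-x) : ℝ) : ℂ) * ((Q m.1 : ℕ) : ℂ) ^ (-s) := by
    have hstep : ∀ n : ℕ+, ((Mfun ν x (n : ℕ) : ℝ) : ℂ) * ((n : ℕ) : ℂ) ^ (-s) =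
        ∑' m : fiber ν (n : ℕ),
          (((G m.1 : ℝ) ^ (-x) : ℝ) : ℂ) * (((n : ℕ) : ℕ) : ℂ) ^ (-s) := by
      intro n
      unfold Mfun
      rw [Complex.ofReal_tsum, ← tsum_mul_right]
      rfl
    rw [tsum_congr hstep]
    exact tsum_fiber_eq (fun n m => (((G m : ℝ) ^ (-x) : ℝ) : ℂ) * ((n : ℕ) : ℂ) ^ (-s)) hTM
  -- step 2 : the r-side Dirichlet series as a sum over nonzero lattice points
  have hR1 : (∑' n : ℕ+, ((rfun ν (n : ℕ) : ℕ) : ℂ) * ((n : ℕ) : ℂ) ^ (-s)) =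
      ∑' m : S ν, ((Q m.1 : ℕ) : ℂ) ^ (-s) := by
    have hstep : ∀ n : ℕ+, ((rfun ν (n : ℕ) : ℕ) : ℂ) * ((n : ℕ) : ℂ) ^ (-s) =
        ∑' _m : fiber ν (n : ℕ), (((n : ℕ) : ℕ) : ℂ) ^ (-s) := by
      intro n
      haveI : Fintype (fiber ν (n : ℕ)) := Fintype.ofFinite _
      rw [show rfun ν (n : ℕ) = Fintype.card (fiber ν (n : ℕ)) from Nat.card_eq_fintype_card,
        tsum_fintype, Finset.sum_const, Finset.card_univ, nsmul_eq_mul]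
    rw [tsum_congr hstep]
    exact tsum_fiber_eq (fun n _m => ((n : ℕ) : ℂ) ^ (-s)) hTR
  -- rewrite the zeta functions
  rw [hL1, hR1, zeta_pnat h2s, zeta_pnat hxs]
  -- expand the products
  rw [tsum_mul_tsum_of_summable_norm hTMnorm hzk2,
    tsum_mul_tsum_of_summable_norm hzkx hTRnorm]
  -- the bijection
  rw [← (Phi ν).tsum_eq (fun q : ℕ+ × S ν =>
    ((q.1 : ℕ) : ℂ) ^ (-((x : ℂ) + 2 * s)) * ((Q q.2.1 : ℕ) : ℂ) ^ (-s))]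
  refine tsum_congr ?_
  rintro ⟨⟨m, hm⟩, k⟩
  exact term_eq x s hm k.2
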